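/- Let A be the adjacency matrix of a finite simple undirected graph on N vertices and let A1 be the off-diagonal part of the symmetrically normalized adjacency matrix with added self-loops. Then the matrix I − A1 is invertible. -/

import Mathlib

open Matrix Finset

/-- The matrix `I - A1` is invertible, where `A1` is the
off-diagonal part of the symmetrically normalized adjacency matrix with added
self-loops. -/
theorem gtnet_one_sub_A1_invertible
    (N : ℕ) (A : Matrix (Fin N) (Fin N) ℝ)
    (hsymm : A.IsSymm)
    (h01 : ∀ i j, A i j = 0 ∨ A i j = 1)
    (hdiag : ∀ i, A i i = 0)
    (d : Fin N → ℝ) (hd : ∀ i, d i = ∑ j, A i j)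
    (A1 : Matrix (Fin N) (Fin N) ℝ)
    (hA1 : ∀ i j, A1 i j =
      if i = j then 0 else A i j / Real.sqrt ((d i + 1) * (d j + 1))) :
    IsUnit (1 - A1) := by
  have hA0 : ∀ i j, 0 ≤ A i j := fun i j => by rcases h01 i j with h | h <;> simp [h]
  have hsymm' : ∀ i j, A i j = A j i := fun i j => hsymm.apply j i
  have hd0 : ∀ i, 0 ≤ d i := fun i => by
    rw [hd i]; exact Finset.sum_nonneg fun j _ => hA0 i j
  set s : Fin N → ℝ := fun i => Real.sqrt (d i + 1) with hs
  have hspos : ∀ i, 0 < s i := fun i => Real.sqrt_pos.mpr (by linarith [hd0 i])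
  have hs2 : ∀ i, s i * s i = d i + 1 := fun i =>
    Real.mul_self_sqrt (by linarith [hd0 i])
  rw [Matrix.isUnit_iff_isUnit_det, isUnit_iff_ne_zero]
  intro hdet
  obtain ⟨v, hv0, hv⟩ := Matrix.exists_mulVec_eq_zero_iff.mpr hdet
  set y : Fin N → ℝ := fun i => v i / s i with hy
  have hvy : ∀ i, v i = s i * y i := fun i => by
    rw [hy]; field_simp; rw [mul_div_cancel_right₀ _ (hspos i).ne']
  have hQ : (0 : ℝ) = ∑ i, v i * ((1 - A1) *ᵥ v) i := by rw [hv]; simp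
  -- the cross terms
  have hA1' : ∀ i j, v i * (A1 i j * v j) = A i j * (y i * y j) := by
    intro i j
    rcases eq_or_ne i j with rfl | hne
    · simp [hA1, hdiag]
    · rw [hA1, if_neg hne, hvy i, hvy j,
        Real.sqrt_mul (by linarith [hd0 i] : (0:ℝ) ≤ d i + 1)]
      have h1 : Real.sqrt (d i + 1) ≠ 0 := (hspos i).ne'
      have h2 : Real.sqrt (d j + 1) ≠ 0 := (hspos j).ne'
      simp only [hs]
      field_simp
  -- expansion of the quadratic form
  have hexp : ∑ i, v i * ((1 - A1) *ᵥ v) i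
      = ∑ i, y i ^ 2 + ∑ i, ∑ j, A i j * (y i ^ 2 - y i * y j) := by
    have hterm : ∀ i, v i * ((1 - A1) *ᵥ v) i
        = y i ^ 2 + ∑ j, A i j * (y i ^ 2 - y i * y j) := by
      intro i
      have hmv : ((1 - A1) *ᵥ v) i = v i - ∑ j, A1 i j * v j := by
        simp [Matrix.mulVec, dotProduct, Matrix.sub_apply, Matrix.one_apply,
          sub_mul, Finset.sum_sub_distrib]
      rw [hmv, mul_sub, Finset.mul_sum]
      simp_rw [hA1']
      have h2 : v i * v i = y i ^ 2 + ∑ j, A i j * y i ^ 2 := by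
        calc v i * v i = (s i * s i) * y i ^ 2 := by rw [hvy i]; ring
          _ = y i ^ 2 + (∑ j, A i j) * y i ^ 2 := by rw [hs2 i, ← hd i]; ring
          _ = y i ^ 2 + ∑ j, A i j * y i ^ 2 := by rw [Finset.sum_mul]
      rw [h2]
      rw [add_sub_assoc, ← Finset.sum_sub_distrib]
      congr 1
      refine Finset.sum_congr rfl fun j _ => by ring
    rw [Finset.sum_congr rfl fun i _ => hterm i, Finset.sum_add_distrib]
  -- nonnegativity of the Laplacian-like term
  have hT : (∑ i, ∑ j, A i j * (y i ^ 2 - y j ^ 2)) = 0 := by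
    have h1 : (∑ i, ∑ j, A i j * (y i ^ 2 - y j ^ 2))
        = ∑ i, ∑ j, A i j * (y j ^ 2 - y i ^ 2) := by
      rw [Finset.sum_comm]
      exact Finset.sum_congr rfl fun i _ => Finset.sum_congr rfl fun j _ => by
        rw [hsymm' j i]
    have h2 : (∑ i, ∑ j, A i j * (y j ^ 2 - y i ^ 2))
        = - ∑ i, ∑ j, A i j * (y i ^ 2 - y j ^ 2) := by
      rw [← Finset.sum_neg_distrib]
      refine Finset.sum_congr rfl fun i _ => ?_
      rw [← Finset.sum_neg_distrib]
      exact Finset.sum_congr rfl fun j _ => by ring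
    linarith [h1.trans h2]
  have hS : 0 ≤ ∑ i, ∑ j, A i j * (y i ^ 2 - y i * y j) := by
    have key : 2 * (∑ i, ∑ j, A i j * (y i ^ 2 - y i * y j))
        = (∑ i, ∑ j, A i j * (y i - y j) ^ 2)
          + ∑ i, ∑ j, A i j * (y i ^ 2 - y j ^ 2) := by
      rw [← Finset.sum_add_distrib, Finset.mul_sum]
      refine Finset.sum_congr rfl fun i _ => ?_
      rw [← Finset.sum_add_distrib, Finset.mul_sum]
      exact Finset.sum_congr rfl fun j _ => by ring
    have hnn : 0 ≤ ∑ i, ∑ j, A i j * (y i - y j) ^ 2 :=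
      Finset.sum_nonneg fun i _ => Finset.sum_nonneg fun j _ =>
        mul_nonneg (hA0 i j) (sq_nonneg _)
    nlinarith [key, hT, hnn]
  have hy2 : ∑ i, y i ^ 2 = 0 := by
    have hnn : 0 ≤ ∑ i, y i ^ 2 := Finset.sum_nonneg fun i _ => sq_nonneg _
    linarith [hQ, hexp]
  have hyz : ∀ i, y i = 0 := by
    intro i
    have := (Finset.sum_eq_zero_iff_of_nonneg
      (fun j _ => sq_nonneg (y j))).mp hy2 i (Finset.mem_univ i)
    exact pow_eq_zero_iff (by norm_num) |>.mp this
  apply hv0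
  funext i
  rw [hvy i, hyz i, mul_zero]; rfl
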